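/- Let x = (x₁, x₂) and y = (y₁, y₂) be points of the upper half plane ℍ² and define z = ( (x₁y₂ + x₂y₁)/(x₂ + y₂), √(x₂y₂)·√((x₂+y₂)² + (x₁−y₁)²)/(x₂ + y₂) ). Then z ∈ ℍ² and z is the hyperbolic midpoint of x and y: ρ(x,z) = ρ(y,z) = ρ(x,y)/2. -/

import Mathlib

/-- The inverse hyperbolic cosine: `arcosh t = log (t + √(t² − 1))`. -/
noncomputable def arcosh (t : ℝ) : ℝ := Real.log (t + Real.sqrt (t ^ 2 - 1))

/-- Hyperbolic distance in the upper half plane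
`ℍ² = { (x₁,x₂) ∈ ℝ² : x₂ > 0 }`: `cosh ρ(x,y) = 1 + |x−y|²/(2 x₂ y₂)`. -/
noncomputable def hypDistHalfPlane (x y : EuclideanSpace ℝ (Fin 2)) : ℝ :=
  arcosh (1 + ‖x - y‖ ^ 2 / (2 * x 1 * y 1))

lemma norm_sq_two (a b : EuclideanSpace ℝ (Fin 2)) :
    ‖a - b‖ ^ 2 = (a 0 - b 0) ^ 2 + (a 1 - b 1) ^ 2 := by
  rw [EuclideanSpace.norm_eq, Real.sq_sqrt (by positivity)]
  simp [Fin.sum_univ_two, Real.norm_eq_abs, sq_abs]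

lemma arcosh_double (a : ℝ) (ha : 1 ≤ a) : arcosh (2 * a ^ 2 - 1) = 2 * arcosh a := by
  unfold arcosh
  have h1 : (0:ℝ) ≤ a ^ 2 - 1 := by nlinarith
  have hs : Real.sqrt ((2 * a ^ 2 - 1) ^ 2 - 1) = 2 * a * Real.sqrt (a ^ 2 - 1) := by
    rw [show (2 * a ^ 2 - 1) ^ 2 - 1 = (2 * a) ^ 2 * (a ^ 2 - 1) by ring,
      Real.sqrt_mul (by positivity), Real.sqrt_sq (by linarith)]
  have hsq := Real.sq_sqrt h1
  rw [hs, show 2 * a ^ 2 - 1 + 2 * a * Real.sqrt (a ^ 2 - 1)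
      = (a + Real.sqrt (a ^ 2 - 1)) ^ 2 by nlinarith, Real.log_pow]
  push_cast; ring

lemma key (p q r t : ℝ) (hq : 0 < q) (ht : 0 < t) :
    1 + ((p - (p * t + q * r) / (q + t)) ^ 2
        + (q - Real.sqrt (q * t) * Real.sqrt ((q + t) ^ 2 + (p - r) ^ 2) / (q + t)) ^ 2)
      / (2 * q * (Real.sqrt (q * t) * Real.sqrt ((q + t) ^ 2 + (p - r) ^ 2) / (q + t)))
    = Real.sqrt ((q + t) ^ 2 + (p - r) ^ 2) / (2 * Real.sqrt (q * t)) := by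
  set s := Real.sqrt (q * t) with hsdef
  set D := Real.sqrt ((q + t) ^ 2 + (p - r) ^ 2) with hDdef
  have hs2 : s ^ 2 = q * t := Real.sq_sqrt (by positivity)
  have hD2 : D ^ 2 = (q + t) ^ 2 + (p - r) ^ 2 := Real.sq_sqrt (by positivity)
  have hspos : 0 < s := Real.sqrt_pos.mpr (by positivity)
  have hDpos : 0 < D := Real.sqrt_pos.mpr (by positivity)
  have hqt : 0 < q + t := by linarith
  have h1 : (p - (p * t + q * r) / (q + t)) ^ 2 + (q - s * D / (q + t)) ^ 2
      = q * D ^ 2 / (q + t) - 2 * q * (s * D / (q + t)) := by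
    field_simp
    linear_combination D ^ 2 * hs2 - q ^ 2 * hD2
  rw [h1]
  field_simp
  nlinarith [hs2, hD2]

/-- The hyperbolic midpoint of two points of the upper half plane. -/
theorem hyperbolic_midpoint_halfPlane (x y z : EuclideanSpace ℝ (Fin 2))
    (hx : 0 < x 1) (hy : 0 < y 1)
    (hz0 : z 0 = (x 0 * y 1 + x 1 * y 0) / (x 1 + y 1))
    (hz1 : z 1 = Real.sqrt (x 1 * y 1) *
      Real.sqrt ((x 1 + y 1) ^ 2 + (x 0 - y 0) ^ 2) / (x 1 + y 1)) :
    0 < z 1 ∧ hypDistHalfPlane x z = hypDistHalfPlane y z ∧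
      hypDistHalfPlane x z = hypDistHalfPlane x y / 2 := by
  have hz1pos : 0 < z 1 := by
    rw [hz1]
    have : 0 < Real.sqrt (x 1 * y 1) := Real.sqrt_pos.mpr (by positivity)
    have : 0 < Real.sqrt ((x 1 + y 1) ^ 2 + (x 0 - y 0) ^ 2) :=
      Real.sqrt_pos.mpr (by positivity)
    positivity
  set s := Real.sqrt (x 1 * y 1) with hsdef
  set D := Real.sqrt ((x 1 + y 1) ^ 2 + (x 0 - y 0) ^ 2) with hDdef
  have hspos : 0 < s := Real.sqrt_pos.mpr (by positivity)
  have hDpos : 0 < D := Real.sqrt_pos.mpr (by positivity)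
  have hs2 : s ^ 2 = x 1 * y 1 := Real.sq_sqrt (by positivity)
  have hD2 : D ^ 2 = (x 1 + y 1) ^ 2 + (x 0 - y 0) ^ 2 := Real.sq_sqrt (by positivity)
  have hax : 1 + ‖x - z‖ ^ 2 / (2 * x 1 * z 1) = D / (2 * s) := by
    rw [norm_sq_two, hz0, hz1]
    exact key (x 0) (x 1) (y 0) (y 1) hx hy
  have hay : 1 + ‖y - z‖ ^ 2 / (2 * y 1 * z 1) = D / (2 * s) := by
    rw [norm_sq_two, hz0, hz1]
    have := key (y 0) (y 1) (x 0) (x 1) hy hx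
    rw [show y 1 * x 1 = x 1 * y 1 by ring, show (y 1 + x 1) = (x 1 + y 1) by ring,
      show (y 0 - x 0) ^ 2 = (x 0 - y 0) ^ 2 by ring,
      show (y 0 * x 1 + y 1 * x 0) = (x 0 * y 1 + x 1 * y 0) by ring] at this
    exact this
  have ha1 : 1 ≤ D / (2 * s) := by
    rw [le_div_iff₀ (by positivity)]
    have : (2 * s) ^ 2 ≤ D ^ 2 := by nlinarith [hs2, hD2, sq_nonneg (x 1 - y 1)]
    nlinarith [hspos, hDpos]
  have hxy : 1 + ‖x - y‖ ^ 2 / (2 * x 1 * y 1) = 2 * (D / (2 * s)) ^ 2 - 1 := by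
    rw [norm_sq_two]
    field_simp
    nlinarith [hs2, hD2, hspos]
  refine ⟨hz1pos, ?_, ?_⟩
  · unfold hypDistHalfPlane
    rw [hax, hay]
  · unfold hypDistHalfPlane
    rw [hax, hxy, arcosh_double _ ha1]
    ring
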